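/- arXiv:1011.2366 — 3 statements merged into one kernel-verified Lean document; each statement's English description precedes it below -/
import Mathlib

section
/- Let I ≥ 3, let Y_i = α + σ_i ε_i for i = 1,…,I with ε_i i.i.d. N(0,1) and σ_i > 0 deterministic, and let r_i = (Y_i − Ȳ)². Define Z = B r where B = ((I²−I)·Id − E)/((I−1)(I−2)). Then E[Z_i] = σ_i² for each i = 1,…,I. -/
open MeasureTheory ProbabilityTheory Finset Matrix Real Filter
open scoped NNReal ENNReal

lemma aux_int_sq_exp : Integrable (fun x : ℝ => x ^ 2 * rexp (-(1/2) * x ^ 2)) := by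
  have h := integrable_rpow_mul_exp_neg_mul_sq (b := 1/2) (by norm_num) (s := 2) (by norm_num)
  refine h.congr ?_
  filter_upwards with x
  rw [show ((2:ℝ) : ℝ) = ((2:ℕ) : ℝ) by norm_num, Real.rpow_natCast]

lemma aux_int_exp : Integrable (fun x : ℝ => rexp (-(1/2) * x ^ 2)) :=
  integrable_exp_neg_mul_sq (by norm_num)

lemma aux_int_mul_exp : Integrable (fun x : ℝ => x * rexp (-(1/2) * x ^ 2)) :=
  integrable_mul_exp_neg_mul_sq (by norm_num)

lemma aux_tendsto_atTop : Tendsto (fun x : ℝ => -x * rexp (-(1/2) * x ^ 2)) atTop (nhds 0) := by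
  have h := rpow_mul_exp_neg_mul_sq_isLittleO_exp_neg (b := 1/2) (by norm_num) 1
  have h2 : Tendsto (fun x : ℝ => rexp (-(1/2) * x)) atTop (nhds 0) := by
    have h0 : Tendsto (fun x : ℝ => (1/2 : ℝ) * x) atTop atTop :=
      Tendsto.const_mul_atTop (by norm_num) tendsto_id
    have : Tendsto (fun x : ℝ => -(1/2) * x) atTop atBot :=
      (tendsto_neg_atTop_atBot.comp h0).congr (fun x => by simp [Function.comp])
    exact Real.tendsto_exp_atBot.comp this
  have h3 := h.trans_tendsto h2
  have h4 : Tendsto (fun x : ℝ => x * rexp (-(1/2) * x ^ 2)) atTop (nhds 0) := by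
    refine h3.congr' ?_
    filter_upwards with x
    rw [Real.rpow_one]
  simpa using h4.neg

lemma aux_tendsto_atBot : Tendsto (fun x : ℝ => -x * rexp (-(1/2) * x ^ 2)) atBot (nhds 0) := by
  have := aux_tendsto_atTop.neg
  have h := (aux_tendsto_atTop.neg).comp tendsto_neg_atBot_atTop
  simp only [neg_zero] at h
  refine h.congr ?_
  intro x
  simp [Function.comp]

lemma aux_integral_sq_exp : ∫ x : ℝ, x ^ 2 * rexp (-(1/2) * x ^ 2) = Real.sqrt (2 * π) := by
  have hderiv : ∀ x : ℝ, HasDerivAt (fun x : ℝ => -x * rexp (-(1/2) * x ^ 2))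
      (x ^ 2 * rexp (-(1/2) * x ^ 2) - rexp (-(1/2) * x ^ 2)) x := by
    intro x
    have h1 : HasDerivAt (fun x : ℝ => -(1/2) * x ^ 2) (-(1/2) * (2 * x)) x := by
      simpa using ((hasDerivAt_pow 2 x).const_mul (-(1/2) : ℝ))
    have h2 : HasDerivAt (fun x : ℝ => rexp (-(1/2) * x ^ 2)) (rexp (-(1/2) * x ^ 2) * (-(1/2) * (2 * x))) x := h1.exp
    have h3 : HasDerivAt (fun x : ℝ => -x * rexp (-(1/2) * x ^ 2)) (-1 * rexp (-(1/2) * x ^ 2) + -x * (rexp (-(1/2) * x ^ 2) * (-(1/2) * (2 * x)))) x := (hasDerivAt_neg x).mul h2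
    convert h3 using 1
    ring
  have hint : Integrable (fun x : ℝ => x ^ 2 * rexp (-(1/2) * x ^ 2) - rexp (-(1/2) * x ^ 2)) :=
    aux_int_sq_exp.sub aux_int_exp
  have h := integral_of_hasDerivAt_of_tendsto hderiv hint aux_tendsto_atBot aux_tendsto_atTop
  rw [sub_zero] at h
  have hsplit := integral_sub aux_int_sq_exp aux_int_exp
  rw [h] at hsplit
  have hg : ∫ x : ℝ, rexp (-(1/2) * x ^ 2) = Real.sqrt (2 * π) := by
    have := integral_gaussian (1/2)
    rw [show Real.sqrt (π / (1/2)) = Real.sqrt (2 * π) by norm_num [mul_comm]] at this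
    convert this using 2
  linarith [hsplit, hg]

lemma aux_pdf_eq (x : ℝ) : gaussianPDFReal 0 1 x = (Real.sqrt (2 * π))⁻¹ * rexp (-(1/2) * x ^ 2) := by
  simp only [gaussianPDFReal, NNReal.coe_one, mul_one, sub_zero]
  ring_nf

lemma aux_pdf_meas : Measurable (fun x : ℝ => (gaussianPDFReal 0 1 x).toNNReal) :=
  measurable_real_toNNReal.comp (stronglyMeasurable_gaussianPDFReal 0 1).measurable

lemma aux_gauss_withDensity : gaussianReal 0 1 =
    (volume : Measure ℝ).withDensity (fun x => ((gaussianPDFReal 0 1 x).toNNReal : ENNReal)) := by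
  rw [gaussianReal_of_var_ne_zero 0 one_ne_zero]
  rfl

lemma aux_integral_gauss (g : ℝ → ℝ) :
    ∫ x, g x ∂(gaussianReal 0 1) = ∫ x, gaussianPDFReal 0 1 x * g x := by
  rw [aux_gauss_withDensity, integral_withDensity_eq_integral_smul aux_pdf_meas]
  congr 1
  funext x
  rw [NNReal.smul_def, Real.coe_toNNReal _ (gaussianPDFReal_nonneg 0 1 x), smul_eq_mul]

lemma aux_sqrt_ne : Real.sqrt (2 * π) ≠ 0 := by
  positivity

lemma aux_gauss_sq_int : ∫ x, x ^ 2 ∂(gaussianReal 0 1) = 1 := by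
  rw [aux_integral_gauss]
  have : ∀ x : ℝ, gaussianPDFReal 0 1 x * x ^ 2
      = (Real.sqrt (2 * π))⁻¹ * (x ^ 2 * rexp (-(1/2) * x ^ 2)) := by
    intro x; rw [aux_pdf_eq]; ring
  simp_rw [this]
  rw [integral_const_mul, aux_integral_sq_exp, inv_mul_cancel₀ aux_sqrt_ne]

lemma aux_gauss_integrable_sq : Integrable (fun x : ℝ => x ^ 2) (gaussianReal 0 1) := by
  rw [aux_gauss_withDensity, integrable_withDensity_iff_integrable_smul aux_pdf_meas]
  refine (aux_int_sq_exp.const_mul ((Real.sqrt (2 * π))⁻¹)).congr ?_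
  filter_upwards with x
  rw [NNReal.smul_def, Real.coe_toNNReal _ (gaussianPDFReal_nonneg 0 1 x), smul_eq_mul, aux_pdf_eq]
  ring

lemma aux_gauss_integrable_id : Integrable (fun x : ℝ => x) (gaussianReal 0 1) := by
  rw [aux_gauss_withDensity, integrable_withDensity_iff_integrable_smul aux_pdf_meas]
  refine (aux_int_mul_exp.const_mul ((Real.sqrt (2 * π))⁻¹)).congr ?_
  filter_upwards with x
  rw [NNReal.smul_def, Real.coe_toNNReal _ (gaussianPDFReal_nonneg 0 1 x), smul_eq_mul, aux_pdf_eq]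
  ring

lemma aux_gauss_id_int : ∫ x, x ∂(gaussianReal 0 1) = 0 := by
  have hmap : (gaussianReal 0 1).map (fun x => (-1 : ℝ) * x) = gaussianReal 0 1 := by
    rw [gaussianReal_map_const_mul (-1)]
    have h1 : (⟨(-1:ℝ)^2, sq_nonneg _⟩ : ℝ≥0) = 1 := by ext; norm_num
    rw [show NNReal.mk ((-1:ℝ)^2) (sq_nonneg _) * 1 = 1 by ext; norm_num, neg_one_mul, neg_zero]
  have h := integral_map (μ := gaussianReal 0 1) (φ := fun x => (-1:ℝ) * x)
      (measurable_const_mul (-1)).aemeasurable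
      (f := fun x : ℝ => x) (by rw [hmap]; exact aestronglyMeasurable_id)
  rw [hmap] at h
  have h2 : ∫ x : ℝ, (-1 : ℝ) * x ∂(gaussianReal 0 1) = ∫ x : ℝ, x ∂(gaussianReal 0 1) := by
    simpa using h.symm
  simp only [neg_one_mul] at h2
  rw [integral_neg] at h2
  linarith

theorem debiased_residuals_recover_variances {Ω : Type*} [MeasurableSpace Ω] (P : Measure Ω)
    [IsProbabilityMeasure P] (I : ℕ) (hI : 3 ≤ I) (α : ℝ) (σ : Fin I → ℝ)
    (hσ : ∀ i, 0 < σ i) (ε : Fin I → Ω → ℝ) (hmeas : ∀ i, Measurable (ε i))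
    (hindep : iIndepFun ε P)
    (hgauss : ∀ i, Measure.map (ε i) P = gaussianReal 0 1)
    (Y : Fin I → Ω → ℝ) (hY : ∀ i ω, Y i ω = α + σ i * ε i ω)
    (B : Matrix (Fin I) (Fin I) ℝ)
    (hB : B = (((I : ℝ) - 1) * ((I : ℝ) - 2))⁻¹ •
        ((((I : ℝ) ^ 2 - (I : ℝ)) • (1 : Matrix (Fin I) (Fin I) ℝ)) -
          Matrix.of fun _ _ => (1 : ℝ)))
    (r : Fin I → Ω → ℝ) (hr : ∀ j ω, r j ω = (Y j ω - (∑ k, Y k ω) / I) ^ 2)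
    (Z : Fin I → Ω → ℝ) (hZ : ∀ j ω, Z j ω = ∑ k, B j k * r k ω) (i : Fin I) :
    ∫ ω, Z i ω ∂P = (σ i) ^ 2 := by
  classical
  have hI3 : (3:ℝ) ≤ (I:ℝ) := by exact_mod_cast hI
  have hI0 : (I:ℝ) ≠ 0 := by linarith
  have hI1 : (I:ℝ) - 1 ≠ 0 := by linarith
  have hI2 : (I:ℝ) - 2 ≠ 0 := by linarith
  -- moments of ε
  have hεint : ∀ k, Integrable (ε k) P := by
    intro k
    have h := (integrable_map_measure aestronglyMeasurable_id (hmeas k).aemeasurable).mp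
      (by rw [hgauss k]; exact aux_gauss_integrable_id)
    simpa [Function.comp] using h
  have hεsqint : ∀ k, Integrable (fun ω => ε k ω ^ 2) P := by
    intro k
    have h := (integrable_map_measure
      ((measurable_id.pow_const 2).aestronglyMeasurable) (hmeas k).aemeasurable).mp
      (by rw [hgauss k]; exact aux_gauss_integrable_sq)
    exact h
  have hεavg : ∀ k, ∫ ω, ε k ω ∂P = 0 := by
    intro k
    have h := integral_map (μ := P) (φ := ε k) (hmeas k).aemeasurable
      (f := fun x : ℝ => x) aestronglyMeasurable_id
    rw [hgauss k, aux_gauss_id_int] at h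
    exact h.symm
  have hεsqavg : ∀ k, ∫ ω, ε k ω ^ 2 ∂P = 1 := by
    intro k
    have h := integral_map (μ := P) (φ := ε k) (hmeas k).aemeasurable
      (f := fun x : ℝ => x ^ 2) ((measurable_id.pow_const 2).aestronglyMeasurable)
    rw [hgauss k, aux_gauss_sq_int] at h
    exact h.symm
  have hpairint : ∀ k l, Integrable (fun ω => ε k ω * ε l ω) P := by
    intro k l
    rcases eq_or_ne k l with rfl | hkl
    · exact (hεsqint k).congr (by filter_upwards with ω; rw [pow_two])
    · exact (hindep.indepFun hkl).integrable_mul (hεint k) (hεint l)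
  have hpairavg : ∀ k l, ∫ ω, ε k ω * ε l ω ∂P = if k = l then 1 else 0 := by
    intro k l
    rcases eq_or_ne k l with rfl | hkl
    · rw [if_pos rfl]
      simpa [pow_two] using hεsqavg k
    · rw [if_neg hkl]
      have h := (hindep.indepFun hkl).integral_mul_eq_mul_integral (hεint k).aestronglyMeasurable (hεint l).aestronglyMeasurable
      simpa [hεavg k, hεavg l] using h
  -- residual decomposition
  set a : Fin I → Fin I → ℝ := fun j k => (if k = j then σ j else 0) - σ k / I with ha
  have hra : ∀ j ω, r j ω = ∑ k, ∑ l, (a j k * a j l) * (ε k ω * ε l ω) := by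
    intro j ω
    have hsum : ∑ k, Y k ω = I * α + ∑ k, σ k * ε k ω := by
      simp only [hY, Finset.sum_add_distrib, Finset.sum_const, Finset.card_univ,
        Fintype.card_fin, nsmul_eq_mul]
    have h1 : Y j ω - (∑ k, Y k ω) / I = ∑ k, a j k * ε k ω := by
      have h2 : ∑ k, a j k * ε k ω = σ j * ε j ω - (∑ k, σ k * ε k ω) / I := by
        simp only [ha, sub_mul, Finset.sum_sub_distrib, ite_mul, zero_mul,
          Finset.sum_ite_eq', Finset.mem_univ, if_true]
        congr 1
        rw [Finset.sum_div]
        exact Finset.sum_congr rfl fun k _ => by ring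
      rw [h2, hY, hsum]
      field_simp
      ring
    rw [hr, h1, sq, Finset.sum_mul_sum]
    exact Finset.sum_congr rfl fun k _ => Finset.sum_congr rfl fun l _ => by ring
  have hrint : ∀ j, Integrable (r j) P := by
    intro j
    rw [show r j = fun ω => ∑ k, ∑ l, (a j k * a j l) * (ε k ω * ε l ω) from funext (hra j)]
    exact integrable_finset_sum _ fun k _ =>
      integrable_finset_sum _ fun l _ => (hpairint k l).const_mul _
  set S := ∑ k, σ k ^ 2 with hS
  have hEr : ∀ j, ∫ ω, r j ω ∂P = (1 - 2/I) * σ j ^ 2 + S / I ^ 2 := by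
    intro j
    have h1 : ∫ ω, r j ω ∂P = ∑ k, ∑ l, (a j k * a j l) * (if k = l then (1:ℝ) else 0) := by
      rw [show r j = fun ω => ∑ k, ∑ l, (a j k * a j l) * (ε k ω * ε l ω) from funext (hra j)]
      rw [integral_finset_sum _ (fun k _ =>
        integrable_finset_sum _ fun l _ => (hpairint k l).const_mul _)]
      refine Finset.sum_congr rfl fun k _ => ?_
      rw [integral_finset_sum _ (fun l _ => (hpairint k l).const_mul _)]
      refine Finset.sum_congr rfl fun l _ => ?_
      rw [integral_const_mul, hpairavg k l]
    rw [h1]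
    have h2 : ∑ k, ∑ l, (a j k * a j l) * (if k = l then (1:ℝ) else 0) = ∑ k, (a j k)^2 := by
      refine Finset.sum_congr rfl fun k _ => ?_
      simp [mul_ite, mul_one, mul_zero, Finset.sum_ite_eq, pow_two]
    rw [h2]
    have h3 : ∀ k : Fin I, (a j k)^2
        = (if k = j then σ j ^2 - 2 * σ j * (σ k / I) else 0) + (σ k / I)^2 := by
      intro k
      simp only [ha]
      split <;> ring
    rw [Finset.sum_congr rfl fun k _ => h3 k, Finset.sum_add_distrib,
      Finset.sum_ite_eq', if_pos (Finset.mem_univ j)]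
    have h4 : ∑ k : Fin I, (σ k / (I:ℝ))^2 = S / I^2 := by
      rw [hS, Finset.sum_div]
      exact Finset.sum_congr rfl fun k _ => by ring
    rw [h4]
    ring
  -- integral of Z
  have hZint : ∫ ω, Z i ω ∂P = ∑ j, B i j * ∫ ω, r j ω ∂P := by
    rw [show Z i = fun ω => ∑ j, B i j * r j ω from funext fun ω => hZ i ω]
    rw [integral_finset_sum _ (fun j _ => (hrint j).const_mul _)]
    exact Finset.sum_congr rfl fun j _ => integral_const_mul _ _
  have hBij : ∀ j, B i j = (((I:ℝ)-1) * ((I:ℝ)-2))⁻¹ *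
      (((I:ℝ)^2 - I) * (if i = j then 1 else 0) - 1) := by
    intro j
    rw [hB]
    simp [Matrix.smul_apply, Matrix.sub_apply, Matrix.one_apply, Matrix.of_apply, smul_eq_mul]
  rw [hZint]
  have hcalc : ∑ j, B i j * ∫ ω, r j ω ∂P
      = (((I:ℝ)-1) * ((I:ℝ)-2))⁻¹ * (((I:ℝ)^2 - I) * ((1 - 2/I) * σ i ^2 + S/I^2)
          - ∑ j, ((1 - 2/(I:ℝ)) * σ j^2 + S/I^2)) := by
    have hterm : ∀ j, B i j * ∫ ω, r j ω ∂P = (((I:ℝ)-1) * ((I:ℝ)-2))⁻¹ *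
        ((((I:ℝ)^2 - I) * (if i = j then 1 else 0)) * ((1 - 2/(I:ℝ)) * σ j^2 + S/I^2)
          - 1 * ((1 - 2/(I:ℝ)) * σ j^2 + S/I^2)) := by
      intro j
      rw [hBij j, hEr j]
      ring
    rw [Finset.sum_congr rfl fun j _ => hterm j, ← Finset.mul_sum]
    congr 1
    rw [Finset.sum_sub_distrib]
    congr 1
    · simp only [mul_ite, mul_one, mul_zero, ite_mul, zero_mul,
        Finset.sum_ite_eq, Finset.mem_univ, if_true]
    · exact Finset.sum_congr rfl fun j _ => one_mul _
  rw [hcalc]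
  have hsum2 : ∑ j : Fin I, ((1 - 2/(I:ℝ)) * σ j^2 + S/I^2)
      = (1 - 2/(I:ℝ)) * S + I * (S / I^2) := by
    rw [Finset.sum_add_distrib, ← Finset.mul_sum, Finset.sum_const, Finset.card_univ,
      Fintype.card_fin, nsmul_eq_mul, hS]
  rw [hsum2]
  field_simp
  ring
end

section
/- Let I ≥ 3 and let (Y_1,…,Y_I) be multivariate normal with mean α·e, Var(Y_i) = σ_i², Cov(Y_i,Y_j) = ρσ_iσ_j for i≠j. With r_i = (Y_i − Ȳ)² and Z = B r where B = ((I²−I)Id − E)/((I−1)(I−2)), one has E[Z_i] = σ_i² − (2ρ/(I−1)) σ_i ∑_{j≠i} σ_j + (2ρ/((I−1)(I−2))) ∑_{1≤j<k≤I, j≠i, k≠i} σ_j σ_k. -/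
open MeasureTheory ProbabilityTheory Finset Matrix

private lemma pair_sum_aux {n : ℕ} (s : Finset (Fin n)) (f : Fin n → ℝ) :
    (∑ j ∈ s, f j) * (∑ j ∈ s, f j) =
      ∑ j ∈ s, f j * f j + 2 * ∑ j ∈ s, ∑ k ∈ s.filter (fun k => j < k), f j * f k := by
  rw [Finset.sum_mul_sum]
  have h1 : ∀ j ∈ s, ∑ k ∈ s, f j * f k
      = f j * f j + (∑ k ∈ s.filter (fun k => j < k), f j * f k
        + ∑ k ∈ s.filter (fun k => k < j), f j * f k) := by
    intro j hj
    rw [← Finset.sum_erase_add _ _ hj, add_comm]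
    congr 1
    rw [← Finset.sum_filter_add_sum_filter_not (s.erase j) (fun k => j < k)]
    congr 1
    · congr 1
      ext k
      simp only [mem_filter, mem_erase]
      constructor
      · rintro ⟨⟨_, hk⟩, h⟩; exact ⟨hk, h⟩
      · rintro ⟨hk, h⟩; exact ⟨⟨ne_of_gt h, hk⟩, h⟩
    · congr 1
      ext k
      simp only [mem_filter, mem_erase, not_lt]
      constructor
      · rintro ⟨⟨hne, hk⟩, h⟩; exact ⟨hk, lt_of_le_of_ne h hne⟩
      · rintro ⟨hk, h⟩; exact ⟨⟨ne_of_lt h, hk⟩, h.le⟩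
  rw [Finset.sum_congr rfl h1, Finset.sum_add_distrib, Finset.sum_add_distrib]
  have h2 : ∑ j ∈ s, ∑ k ∈ s.filter (fun k => k < j), f j * f k
      = ∑ j ∈ s, ∑ k ∈ s.filter (fun k => j < k), f j * f k := by
    rw [Finset.sum_comm' (s' := fun k => s.filter (fun j => k < j)) (t' := s)]
    · exact Finset.sum_congr rfl fun j hj => Finset.sum_congr rfl fun k hk => mul_comm _ _
    · intro j k
      simp only [mem_filter]
      tauto
  rw [h2]; ring

private lemma l2_mul_integrable {Ω : Type*} [MeasurableSpace Ω] (P : Measure Ω)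
    [IsProbabilityMeasure P] (f g : Ω → ℝ) (hf : MemLp f 2 P) (hg : MemLp g 2 P) :
    Integrable (fun ω => f ω * g ω) P := by
  have h := hf.smul hg (p := 2) (q := 2) (r := 1)
  rw [memLp_one_iff_integrable] at h
  exact h.congr (by filter_upwards with ω; simp [mul_comm])

theorem bias_of_debiased_residuals_correlated {Ω : Type*} [MeasurableSpace Ω] (P : Measure Ω)
    [IsProbabilityMeasure P] (I : ℕ) (hI : 3 ≤ I) (α ρ : ℝ) (σ : Fin I → ℝ)
    (hσ : ∀ i, 0 < σ i) (Y : Fin I → Ω → ℝ) (hmeas : ∀ i, Measurable (Y i))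
    (hgauss : ∀ a : Fin I → ℝ, ∃ (m : ℝ) (v : NNReal),
      Measure.map (fun ω => ∑ i, a i * Y i ω) P = gaussianReal m v)
    (hmean : ∀ i, ∫ ω, Y i ω ∂P = α)
    (hvar : ∀ i, variance (Y i) P = (σ i) ^ 2)
    (hcov : ∀ i j, i ≠ j → ∫ ω, (Y i ω - α) * (Y j ω - α) ∂P = ρ * σ i * σ j)
    (B : Matrix (Fin I) (Fin I) ℝ)
    (hB : B = (((I : ℝ) - 1) * ((I : ℝ) - 2))⁻¹ •
        ((((I : ℝ) ^ 2 - (I : ℝ)) • (1 : Matrix (Fin I) (Fin I) ℝ)) -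
          Matrix.of fun _ _ => (1 : ℝ)))
    (r : Fin I → Ω → ℝ) (hr : ∀ j ω, r j ω = (Y j ω - (∑ k, Y k ω) / I) ^ 2)
    (Z : Fin I → Ω → ℝ) (hZ : ∀ j ω, Z j ω = ∑ k, B j k * r k ω) (i : Fin I) :
    ∫ ω, Z i ω ∂P =
      (σ i) ^ 2 - (2 * ρ / ((I : ℝ) - 1)) * σ i * (∑ j ∈ univ.erase i, σ j) +
        (2 * ρ / (((I : ℝ) - 1) * ((I : ℝ) - 2))) *
          (∑ j ∈ univ.erase i, ∑ k ∈ (univ.erase i).filter (fun k => j < k),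
            σ j * σ k) := by
  have h3 : (3 : ℝ) ≤ (I : ℝ) := by exact_mod_cast hI
  have hn0 : (I : ℝ) ≠ 0 := by linarith
  have hn1 : (I : ℝ) - 1 ≠ 0 := by intro h; linarith [h]
  have hn2 : (I : ℝ) - 2 ≠ 0 := by intro h; linarith [h]
  set X : Fin I → Ω → ℝ := fun j ω => Y j ω - α with hX
  -- membership in L²
  have hmem : ∀ j, MemLp (Y j) 2 P := by
    intro j
    rw [← evariance_lt_top_iff_memLp (hmeas j).aestronglyMeasurable]
    by_contra h
    rw [not_lt, top_le_iff] at h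
    have hv := hvar j
    rw [variance, h, ENNReal.toReal_top] at hv
    nlinarith [hσ j]
  have hXmem : ∀ j, MemLp (X j) 2 P := fun j => (hmem j).sub (memLp_const α)
  have hprod : ∀ j k, Integrable (fun ω => X j ω * X k ω) P :=
    fun j k => l2_mul_integrable P _ _ (hXmem j) (hXmem k)
  -- second moments
  have hCdiag : ∀ j, ∫ ω, X j ω * X j ω ∂P = σ j ^ 2 := by
    intro j
    have h2 := variance_eq_integral (μ := P) (hmeas j).aemeasurable
    rw [hvar j, hmean j] at h2
    rw [h2]
    apply integral_congr_ae
    filter_upwards with ω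
    simp [hX, sq]
  have hC : ∀ j k, ∫ ω, X j ω * X k ω ∂P = if j = k then σ j ^ 2 else ρ * σ j * σ k := by
    intro j k
    by_cases h : j = k
    · subst h; simp [hCdiag j]
    · simp only [h, if_false]
      exact hcov j k h
  set S : ℝ := ∑ j, σ j with hS
  set Q : ℝ := ∑ j, σ j ^ 2 with hQ
  have hrow : ∀ k, ∑ j, (∫ ω, X k ω * X j ω ∂P) = σ k ^ 2 + ρ * σ k * (S - σ k) := by
    intro k
    rw [← Finset.sum_erase_add _ _ (mem_univ k), hC k k, if_pos rfl, add_comm]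
    congr 1
    have h1 : ∀ j ∈ univ.erase k, ∫ ω, X k ω * X j ω ∂P = ρ * σ k * σ j := by
      intro j hj
      rw [hC k j, if_neg (Ne.symm (Finset.ne_of_mem_erase hj))]
    rw [Finset.sum_congr rfl h1, ← Finset.mul_sum,
      Finset.sum_erase_eq_sub (mem_univ k)]
  have hQW : ∑ j, (σ j ^ 2 + ρ * σ j * (S - σ j)) = Q + ρ * (S * S - Q) := by
    rw [Finset.sum_add_distrib]
    congr 1
    have : ∀ j, ρ * σ j * (S - σ j) = ρ * S * σ j - ρ * σ j ^ 2 := fun j => by ring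
    simp only [this]
    rw [Finset.sum_sub_distrib, ← Finset.mul_sum, ← Finset.mul_sum, ← hS, ← hQ]
    ring
  -- the expansion of r k
  have hfun : ∀ k, r k = fun ω => X k ω * X k ω - (2 / (I : ℝ)) * ∑ j, X k ω * X j ω
      + (1 / (I : ℝ) ^ 2) * ∑ j, ∑ l, X j ω * X l ω := by
    intro k
    funext ω
    rw [hr]
    have hsum : (∑ j, Y j ω) / (I : ℝ) = (∑ j, X j ω) / (I : ℝ) + α := by
      simp only [hX]
      rw [Finset.sum_sub_distrib, Finset.sum_const, Finset.card_univ, Fintype.card_fin,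
        nsmul_eq_mul]
      field_simp
      ring
    rw [hsum]
    have e1 : ∑ j, X k ω * X j ω = X k ω * ∑ j, X j ω := (Finset.mul_sum _ _ _).symm
    have e2 : ∑ j, ∑ l, X j ω * X l ω = (∑ j, X j ω) * (∑ l, X l ω) :=
      (Finset.sum_mul_sum _ _ _ _).symm
    rw [e1, e2]
    have e3 : Y k ω - ((∑ j, X j ω) / (I : ℝ) + α) = X k ω - (∑ j, X j ω) / (I : ℝ) := by
      simp only [hX]; ring
    rw [e3]
    field_simp
    ring
  have hI2 : ∀ k, Integrable (fun ω => ∑ j, X k ω * X j ω) P :=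
    fun k => integrable_finset_sum _ fun j _ => hprod k j
  have hI3 : Integrable (fun ω => ∑ j, ∑ l, X j ω * X l ω) P :=
    integrable_finset_sum _ fun j _ => integrable_finset_sum _ fun l _ => hprod j l
  have hrint : ∀ k, Integrable (r k) P := by
    intro k
    rw [hfun k]
    exact ((hprod k k).sub ((hI2 k).const_mul _)).add (hI3.const_mul _)
  have hdouble : ∫ ω, ∑ j, ∑ l, X j ω * X l ω ∂P = Q + ρ * (S * S - Q) := by
    rw [integral_finset_sum _ (fun j _ => integrable_finset_sum _ fun l _ => hprod j l)]
    have h1 : ∀ j ∈ univ, ∫ ω, ∑ l, X j ω * X l ω ∂P = σ j ^ 2 + ρ * σ j * (S - σ j) := by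
      intro j _
      rw [integral_finset_sum _ (fun l _ => hprod j l)]
      exact hrow j
    rw [Finset.sum_congr rfl h1, hQW]
  have hErk : ∀ k, ∫ ω, r k ω ∂P = σ k ^ 2 - (2 / (I : ℝ)) * (σ k ^ 2 + ρ * σ k * (S - σ k))
      + (1 / (I : ℝ) ^ 2) * (Q + ρ * (S * S - Q)) := by
    intro k
    have ha : Integrable (fun ω => X k ω * X k ω
        - 2 / (I : ℝ) * ∑ j, X k ω * X j ω) P :=
      (hprod k k).sub ((hI2 k).const_mul _)
    have hb : Integrable (fun ω => 1 / (I : ℝ) ^ 2 * ∑ j, ∑ l, X j ω * X l ω) P :=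
      hI3.const_mul _
    have : (fun ω => r k ω) = r k := rfl
    rw [this, hfun k, integral_add ha hb,
      integral_sub (hprod k k) ((hI2 k).const_mul _),
      integral_const_mul, integral_const_mul,
      integral_finset_sum _ (fun j _ => hprod k j), hrow k, hCdiag k, hdouble]
  -- expectation of Z i
  have hZint : ∫ ω, Z i ω ∂P = ∑ k, B i k * ∫ ω, r k ω ∂P := by
    have h1 : (fun ω => Z i ω) = fun ω => ∑ k, B i k * r k ω := by
      funext ω; exact hZ i ω
    rw [h1, integral_finset_sum _ (fun k _ => (hrint k).const_mul _)]
    exact Finset.sum_congr rfl fun k _ => integral_const_mul _ _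
  have hBval : ∀ k, B i k = (((I : ℝ) - 1) * ((I : ℝ) - 2))⁻¹ *
      (((I : ℝ) ^ 2 - (I : ℝ)) * (if i = k then 1 else 0) - 1) := by
    intro k
    rw [hB]
    simp [Matrix.smul_apply, Matrix.sub_apply, Matrix.one_apply, smul_eq_mul,
      mul_ite, mul_one, mul_zero]
  rw [hZint]
  set c : ℝ := (((I : ℝ) - 1) * ((I : ℝ) - 2))⁻¹ with hc
  set E : Fin I → ℝ := fun k => σ k ^ 2 - (2 / (I : ℝ)) * (σ k ^ 2 + ρ * σ k * (S - σ k))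
      + (1 / (I : ℝ) ^ 2) * (Q + ρ * (S * S - Q)) with hE
  have h1 : ∀ k ∈ univ, B i k * ∫ ω, r k ω ∂P
      = c * (((I : ℝ) ^ 2 - (I : ℝ)) * (if i = k then 1 else 0) - 1) * E k := by
    intro k _
    rw [hBval k, hErk k, mul_assoc]
  rw [Finset.sum_congr rfl h1]
  have h2 : ∑ k, c * (((I : ℝ) ^ 2 - (I : ℝ)) * (if i = k then 1 else 0) - 1) * E k
      = c * (((I : ℝ) ^ 2 - (I : ℝ)) * E i - ∑ k, E k) := by
    have hterm : ∀ k, c * (((I : ℝ) ^ 2 - (I : ℝ)) * (if i = k then 1 else 0) - 1) * E k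
        = c * ((I : ℝ) ^ 2 - (I : ℝ)) * ((if i = k then 1 else 0) * E k) - c * E k := by
      intro k; ring
    simp only [hterm]
    rw [Finset.sum_sub_distrib, ← Finset.mul_sum, ← Finset.mul_sum]
    have : ∑ k, (if i = k then (1 : ℝ) else 0) * E k = E i := by
      simp [ite_mul]
    rw [this]
    ring
  rw [h2]
  -- sum of E k
  have hsumE : ∑ k, E k = Q - (2 / (I : ℝ)) * (Q + ρ * (S * S - Q))
      + (I : ℝ) * ((1 / (I : ℝ) ^ 2) * (Q + ρ * (S * S - Q))) := by
    simp only [hE]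
    rw [Finset.sum_add_distrib, Finset.sum_sub_distrib, ← Finset.mul_sum, hQW, ← hQ,
      Finset.sum_const, Finset.card_univ, Fintype.card_fin, nsmul_eq_mul]
  rw [hsumE]
  -- rewrite RHS sums
  have herase : ∑ j ∈ univ.erase i, σ j = S - σ i :=
    Finset.sum_erase_eq_sub (mem_univ i)
  have heraseQ : ∑ j ∈ univ.erase i, σ j * σ j = Q - σ i ^ 2 := by
    have : ∀ j ∈ univ.erase i, σ j * σ j = σ j ^ 2 := fun j _ => (sq (σ j)).symm
    rw [Finset.sum_congr rfl this, Finset.sum_erase_eq_sub (mem_univ i)]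
  have hpair := pair_sum_aux (univ.erase i) σ
  rw [herase, heraseQ] at hpair
  -- hpair : (S - σ i) * (S - σ i) = Q - σ i ^ 2 + 2 * T
  have hT : ∑ j ∈ univ.erase i, ∑ k ∈ (univ.erase i).filter (fun k => j < k), σ j * σ k
      = ((S - σ i) * (S - σ i) - (Q - σ i ^ 2)) / 2 := by
    rw [hpair]; ring
  rw [herase, hT, hE, hc]
  have hii : (if i = i then (1 : ℝ) else 0) = 1 := if_pos rfl
  simp only [hii]
  field_simp
  ring
end

section
/- Let Y_1,…,Y_I be independent with Y_i = α + σ_i ε_i, ε_i i.i.d. N(0,1), I ≥ 3, and r_i = (Y_i − Ȳ)², i ≠ j. Then Cov(r_i, r_j) = 2(I−1)²(σ_i⁴+σ_j⁴)/I⁴ + 4(I−1)²σ_i²σ_j²/I⁴ − 4(I−1)∑_{k≠i,j} σ_k²(σ_i²+σ_j²)/I⁴ + 4∑_{k,l≠i,j; l<k} σ_l²σ_k²/I⁴ + 2∑_{k≠i,j} σ_k⁴/I⁴. -/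
open MeasureTheory ProbabilityTheory Finset Real Filter
open scoped NNReal ENNReal



noncomputable def gmG (n : ℕ) : ℝ := ∫ x : ℝ, x ^ n * rexp (-(2⁻¹) * x ^ 2)

lemma gmG_integrable (n : ℕ) : Integrable (fun x : ℝ => x ^ n * rexp (-(2⁻¹) * x ^ 2)) := by
  have h := integrable_rpow_mul_exp_neg_mul_sq (b := 2⁻¹) (by norm_num)
    (s := (n : ℝ)) (by exact_mod_cast neg_one_lt_zero.trans_le (Nat.cast_nonneg n))
  simpa [Real.rpow_natCast] using h

lemma gmG_zero : gmG 0 = Real.sqrt (2 * π) := by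
  have := integral_gaussian 2⁻¹
  simp only [gmG, pow_zero, one_mul]
  rw [this]
  norm_num [mul_comm]

lemma exp_tendsto_top : Tendsto (fun x : ℝ => rexp (-(2⁻¹) * x ^ 2)) atTop (nhds 0) := by
  have h : Tendsto (fun x : ℝ => -(2⁻¹:ℝ) * x ^ 2) atTop atBot :=
    (tendsto_const_mul_atBot_of_neg (by norm_num)).mpr (tendsto_pow_atTop two_ne_zero)
  simpa [Function.comp_def] using Real.tendsto_exp_atBot.comp h

lemma exp_tendsto_bot : Tendsto (fun x : ℝ => rexp (-(2⁻¹) * x ^ 2)) atBot (nhds 0) := by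
  have h : Tendsto (fun x : ℝ => -(2⁻¹:ℝ) * x ^ 2) atBot atBot := by
    refine (tendsto_const_mul_atBot_of_neg (by norm_num)).mpr ?_
    have heq : (fun x : ℝ => x ^ 2) = (fun x : ℝ => x ^ 2) ∘ (fun x : ℝ => -x) :=
      funext fun x => (neg_sq x).symm
    rw [heq]
    exact (tendsto_pow_atTop (n := 2) two_ne_zero).comp tendsto_neg_atBot_atTop
  simpa [Function.comp_def] using Real.tendsto_exp_atBot.comp h

lemma gmG_one : gmG 1 = 0 := by
  have hderiv : ∀ x : ℝ, HasDerivAt (fun x : ℝ => -rexp (-(2⁻¹) * x ^ 2))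
      (x ^ 1 * rexp (-(2⁻¹) * x ^ 2)) x := by
    intro x
    have h1 : HasDerivAt (fun x : ℝ => -(2⁻¹:ℝ) * x ^ 2) (-x) x := by
      have := (hasDerivAt_pow 2 x).const_mul (-(2⁻¹:ℝ))
      refine this.congr_deriv ?_
      push_cast; ring
    have h2 := (h1.exp).neg
    refine h2.congr_deriv ?_
    simp [pow_one]
    ring
  have := integral_of_hasDerivAt_of_tendsto hderiv (gmG_integrable 1)
    exp_tendsto_bot.neg exp_tendsto_top.neg
  simpa [gmG] using this

lemma gmG_rec (n : ℕ) : gmG (n + 2) = (n + 1) * gmG n := by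
  have hderiv : ∀ x : ℝ, HasDerivAt (fun x : ℝ => x ^ (n+1) * rexp (-(2⁻¹) * x ^ 2))
      ((n+1 : ℝ) * (x ^ n * rexp (-(2⁻¹) * x ^ 2)) - x ^ (n+2) * rexp (-(2⁻¹) * x ^ 2)) x := by
    intro x
    have h1 : HasDerivAt (fun x : ℝ => -(2⁻¹:ℝ) * x ^ 2) (-x) x := by
      have := (hasDerivAt_pow 2 x).const_mul (-(2⁻¹:ℝ))
      refine this.congr_deriv ?_
      push_cast; ring
    have h2 : HasDerivAt (fun x : ℝ => rexp (-(2⁻¹) * x ^ 2))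
        (rexp (-(2⁻¹) * x ^ 2) * (-x)) x := h1.exp
    have h3 := (hasDerivAt_pow (n+1) x).mul h2
    refine h3.congr_deriv ?_
    push_cast
    ring
  have hint : Integrable (fun x : ℝ =>
      (n+1 : ℝ) * (x ^ n * rexp (-(2⁻¹) * x ^ 2)) - x ^ (n+2) * rexp (-(2⁻¹) * x ^ 2)) :=
    ((gmG_integrable n).const_mul _).sub (gmG_integrable (n+2))
  have hf : Integrable (fun x : ℝ => x ^ (n+1) * rexp (-(2⁻¹) * x ^ 2)) := gmG_integrable (n+1)
  have h0 := integral_eq_zero_of_hasDerivAt_of_integrable hderiv hint hf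
  rw [integral_sub ((gmG_integrable n).const_mul _) (gmG_integrable (n+2)),
    integral_const_mul] at h0
  have : (n + 1 : ℝ) * gmG n - gmG (n+2) = 0 := h0
  linarith

noncomputable def gmom (n : ℕ) : ℝ := ∫ x : ℝ, x ^ n ∂(gaussianReal 0 1)

lemma pdf_smul_eq (n : ℕ) : (fun x : ℝ => ((gaussianPDFReal 0 1 x).toNNReal : ℝ≥0) • (x ^ n))
    = fun x : ℝ => (Real.sqrt (2 * π))⁻¹ * (x ^ n * rexp (-(2⁻¹) * x ^ 2)) := by
  funext x
  have hnn : 0 ≤ gaussianPDFReal 0 1 x := gaussianPDFReal_nonneg 0 1 x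
  rw [NNReal.smul_def, smul_eq_mul, Real.coe_toNNReal _ hnn, gaussianPDFReal]
  push_cast
  rw [mul_one]
  ring_nf

lemma gmom_eq (n : ℕ) : gmom n = (Real.sqrt (2 * π))⁻¹ * gmG n := by
  have h1 : gaussianReal 0 1 = volume.withDensity (gaussianPDF 0 1) :=
    gaussianReal_of_var_ne_zero 0 one_ne_zero
  have h2 : gaussianPDF 0 1 = fun x => (((gaussianPDFReal 0 1 x).toNNReal : ℝ≥0) : ℝ≥0∞) := by
    funext x; rfl
  rw [gmom, h1, h2, integral_withDensity_eq_integral_smul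
    ((measurable_gaussianPDFReal 0 1).real_toNNReal) (fun x => x ^ n)]
  rw [gmG, ← integral_const_mul]
  exact congrArg _ (funext fun x => congrFun (pdf_smul_eq n) x)

lemma gmom_pow_integrable (n : ℕ) : Integrable (fun x : ℝ => x ^ n) (gaussianReal 0 1) := by
  have h1 : gaussianReal 0 1 = volume.withDensity (gaussianPDF 0 1) :=
    gaussianReal_of_var_ne_zero 0 one_ne_zero
  have h2 : gaussianPDF 0 1 = fun x => (((gaussianPDFReal 0 1 x).toNNReal : ℝ≥0) : ℝ≥0∞) := by
    funext x; rfl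
  rw [h1, h2]
  rw [integrable_withDensity_iff_integrable_smul ((measurable_gaussianPDFReal 0 1).real_toNNReal)]
  rw [show (fun x : ℝ => ((gaussianPDFReal 0 1 x).toNNReal : ℝ≥0) • (x ^ n))
    = _ from pdf_smul_eq n]
  exact (gmG_integrable n).const_mul _

lemma gmom_zero : gmom 0 = 1 := by simp [gmom]
lemma gmom_one : gmom 1 = 0 := by simp [gmom_eq, gmG_one]
lemma gmom_two : gmom 2 = 1 := by
  have h := gmG_rec 0
  rw [gmom_eq, h, gmG_zero]
  have : Real.sqrt (2 * π) ≠ 0 := by positivity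
  field_simp
  norm_num
lemma gmom_three : gmom 3 = 0 := by
  have h := gmG_rec 1
  rw [gmom_eq, h, gmG_one]; simp
lemma gmom_four : gmom 4 = 3 := by
  have h := gmG_rec 2
  have h2 := gmG_rec 0
  rw [gmom_eq, h, h2, gmG_zero]
  have : Real.sqrt (2 * π) ≠ 0 := by positivity
  field_simp
  ring



section CL
variable {N : ℕ}

lemma prodr (f : ℕ → ℝ) (hf0 : f 0 = 1) (c : Fin N → ℕ) (s : Finset (Fin N))
    (hc : ∀ p, p ∉ s → c p = 0) : ∏ p, f (c p) = ∏ p ∈ s, f (c p) :=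
  (Finset.prod_subset (subset_univ s) (fun x _ hx => by rw [hc x hx, hf0])).symm

lemma isserlis (f : ℕ → ℝ) (hf0 : f 0 = 1) (hf1 : f 1 = 0) (hf2 : f 2 = 1)
    (hf3 : f 3 = 0) (hf4 : f 4 = 3) (k l m n : Fin N) :
    ∏ p, f ((if p = k then 1 else 0) + (if p = l then 1 else 0) +
      (if p = m then 1 else 0) + (if p = n then 1 else 0)) =
    (if k = l then (1:ℝ) else 0) * (if m = n then (1:ℝ) else 0) +
    (if k = m then (1:ℝ) else 0) * (if l = n then (1:ℝ) else 0) +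
    (if k = n then (1:ℝ) else 0) * (if l = m then (1:ℝ) else 0) := by
  classical
  set c : Fin N → ℕ := fun p => (if p = k then 1 else 0) + (if p = l then 1 else 0) +
      (if p = m then 1 else 0) + (if p = n then 1 else 0) with hc
  by_cases h1 : k = l
  · subst h1
    by_cases h2 : m = n
    · subst h2
      by_cases h3 : k = m
      · subst h3
        rw [prodr f hf0 c {k} (by intro p hp; simp at hp; simp [hc, hp])]
        simp [hc]
        norm_num [hf4]
      · rw [prodr f hf0 c {k, m} (by intro p hp; simp at hp; simp [hc, hp.1, hp.2])]
        rw [Finset.prod_pair h3]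
        simp [hc, h3, Ne.symm h3]
        norm_num [hf2]
    · by_cases h3 : k = m
      · subst h3
        rw [prodr f hf0 c {k, n} (by intro p hp; simp at hp; simp [hc, hp.1, hp.2])]
        rw [Finset.prod_pair h2]
        simp [hc, h2, Ne.symm h2]
        norm_num [hf3, hf1]
      · by_cases h4 : k = n
        · subst h4
          rw [prodr f hf0 c {k, m} (by intro p hp; simp at hp; simp [hc, hp.1, hp.2])]
          rw [Finset.prod_pair h3]
          simp [hc, h3, Ne.symm h3, h2, Ne.symm h2]
          norm_num [hf3, hf1]
        · rw [prodr f hf0 c {k, m, n} (by intro p hp; simp at hp; simp [hc, hp.1, hp.2.1, hp.2.2])]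
          rw [Finset.prod_insert (by simp [h3, h4]), Finset.prod_pair h2]
          simp [hc, h3, Ne.symm h3, h4, Ne.symm h4, h2, Ne.symm h2]
          norm_num [hf2, hf1]
  · by_cases h2 : m = n
    · subst h2
      by_cases h3 : k = m
      · subst h3
        rw [prodr f hf0 c {k, l} (by intro p hp; simp at hp; simp [hc, hp.1, hp.2])]
        rw [Finset.prod_pair (fun h => h1 h)]
        simp [hc, h1, Ne.symm h1]
        norm_num [hf3, hf1]
      · by_cases h4 : l = m
        · subst h4
          rw [prodr f hf0 c {k, l} (by intro p hp; simp at hp; simp [hc, hp.1, hp.2])]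
          rw [Finset.prod_pair (fun h => h1 h)]
          simp [hc, h1, Ne.symm h1, h3, Ne.symm h3]
          norm_num [hf3, hf1]
        · rw [prodr f hf0 c {k, l, m} (by intro p hp; simp at hp; simp [hc, hp.1, hp.2.1, hp.2.2])]
          rw [Finset.prod_insert (by simp [h1, h3]), Finset.prod_pair h4]
          simp [hc, h1, Ne.symm h1, h3, Ne.symm h3, h4, Ne.symm h4]
          norm_num [hf2, hf1]
    · by_cases h3 : k = m
      · subst h3
        by_cases h4 : l = n
        · subst h4
          rw [prodr f hf0 c {k, l} (by intro p hp; simp at hp; simp [hc, hp.1, hp.2])]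
          rw [Finset.prod_pair (fun h => h1 h)]
          simp [hc, h1, Ne.symm h1, h2, Ne.symm h2]
          norm_num [hf2]
        · rw [prodr f hf0 c {k, l, n} (by intro p hp; simp at hp; simp [hc, hp.1, hp.2.1, hp.2.2])]
          rw [Finset.prod_insert (by simp [h1, h2]), Finset.prod_pair h4]
          simp [hc, h1, Ne.symm h1, h2, Ne.symm h2, h4, Ne.symm h4]
          norm_num [hf2, hf1]
      · by_cases h4 : k = n
        · subst h4
          by_cases h5 : l = m
          · subst h5
            rw [prodr f hf0 c {k, l} (by intro p hp; simp at hp; simp [hc, hp.1, hp.2])]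
            rw [Finset.prod_pair (fun h => h1 h)]
            simp [hc, h1, Ne.symm h1, h2, Ne.symm h2]
            norm_num [hf2]
          · rw [prodr f hf0 c {k, l, m} (by intro p hp; simp at hp; simp [hc, hp.1, hp.2.1, hp.2.2])]
            rw [Finset.prod_insert (by simp [h1, h3]), Finset.prod_pair h5]
            simp [hc, h1, Ne.symm h1, h2, Ne.symm h2, h3, Ne.symm h3, h5, Ne.symm h5]
            norm_num [hf2, hf1]
        · by_cases h5 : l = m
          · subst h5
            have h6 : l ≠ n := fun h => h2 h
            rw [prodr f hf0 c {k, l, n} (by intro p hp; simp at hp; simp [hc, hp.1, hp.2.1, hp.2.2])]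
            rw [Finset.prod_insert (by simp [h1, h4]), Finset.prod_pair h6]
            simp [hc, h1, Ne.symm h1, h3, Ne.symm h3, h4, Ne.symm h4, h6, Ne.symm h6]
            norm_num [hf2, hf1]
          · by_cases h6 : l = n
            · subst h6
              rw [prodr f hf0 c {k, l, m} (by intro p hp; simp at hp; simp [hc, hp.1, hp.2.1, hp.2.2])]
              rw [Finset.prod_insert (by simp [h1, h3]), Finset.prod_pair h5]
              simp [hc, h1, Ne.symm h1, h3, Ne.symm h3, h4, Ne.symm h4, h5, Ne.symm h5]
              norm_num [hf2, hf1]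
            · rw [prodr f hf0 c {k, l, m, n} (by intro p hp; simp at hp; simp [hc, hp.1, hp.2.1, hp.2.2.1, hp.2.2.2])]
              rw [Finset.prod_insert (by simp [h1, h3, h4]),
                Finset.prod_insert (by simp [h5, h6]), Finset.prod_pair h2]
              simp [hc, h1, Ne.symm h1, h2, Ne.symm h2, h3, Ne.symm h3, h4, Ne.symm h4,
                h5, Ne.symm h5, h6, Ne.symm h6]
              norm_num [hf1]

lemma isserlis2 (f : ℕ → ℝ) (hf0 : f 0 = 1) (hf1 : f 1 = 0) (hf2 : f 2 = 1)
    (k l : Fin N) :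
    ∏ p, f ((if p = k then 1 else 0) + (if p = l then 1 else 0)) =
    (if k = l then (1:ℝ) else 0) := by
  classical
  set c : Fin N → ℕ := fun p => (if p = k then 1 else 0) + (if p = l then 1 else 0) with hc
  by_cases h1 : k = l
  · subst h1
    rw [prodr f hf0 c {k} (by intro p hp; simp at hp; simp [hc, hp])]
    simp [hc]
    norm_num [hf2]
  · rw [prodr f hf0 c {k, l} (by intro p hp; simp at hp; simp [hc, hp.1, hp.2])]
    rw [Finset.prod_pair h1]
    simp [hc, h1, Ne.symm h1]
    norm_num [hf1]
end CL


lemma sum_if_const {α : Type*} (s : Finset α) (c : Prop) [Decidable c] (g : α → ℝ) :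
    ∑ x ∈ s, (if c then g x else 0) = if c then ∑ x ∈ s, g x else 0 := by
  split_ifs <;> simp

lemma quad_sum {N : ℕ} (a b : Fin N → ℝ) :
    ∑ k, ∑ l, ∑ m, ∑ n, (a k * a l * b m * b n) *
      ((if k = l then (1:ℝ) else 0) * (if m = n then (1:ℝ) else 0) +
       (if k = m then (1:ℝ) else 0) * (if l = n then (1:ℝ) else 0) +
       (if k = n then (1:ℝ) else 0) * (if l = m then (1:ℝ) else 0))
    = (∑ k, a k ^ 2) * (∑ k, b k ^ 2) + 2 * (∑ k, a k * b k) ^ 2 := by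
  classical
  have expand : ∀ k l m n : Fin N, (a k * a l * b m * b n) *
      ((if k = l then (1:ℝ) else 0) * (if m = n then (1:ℝ) else 0) +
       (if k = m then (1:ℝ) else 0) * (if l = n then (1:ℝ) else 0) +
       (if k = n then (1:ℝ) else 0) * (if l = m then (1:ℝ) else 0)) =
      (if m = n then (if k = l then a k * a l * b m * b n else 0) else 0) +
      (if l = n then (if k = m then a k * a l * b m * b n else 0) else 0) +
      (if k = n then (if l = m then a k * a l * b m * b n else 0) else 0) := by
    intro k l m n
    split_ifs <;> ring
  simp only [expand, Finset.sum_add_distrib]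
  have t1 : ∑ k, ∑ l, ∑ m, ∑ n : Fin N,
      (if m = n then (if k = l then a k * a l * b m * b n else 0) else 0)
      = (∑ k, a k ^ 2) * (∑ k, b k ^ 2) := by
    have h1 : ∀ k l m : Fin N, ∑ n : Fin N,
        (if m = n then (if k = l then a k * a l * b m * b n else 0) else 0)
        = if k = l then a k * a l * b m * b m else 0 :=
      fun k l m => Finset.sum_ite_eq univ m (fun n => if k = l then a k * a l * b m * b n else 0)
        |>.trans (by simp)
    simp only [h1]
    have h2 : ∀ k l : Fin N, ∑ m : Fin N, (if k = l then a k * a l * b m * b m else 0)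
        = if k = l then ∑ m : Fin N, a k * a l * b m * b m else 0 :=
      fun k l => sum_if_const univ _ _
    simp only [h2]
    have h3 : ∀ k : Fin N, ∑ l : Fin N, (if k = l then ∑ m : Fin N, a k * a l * b m * b m else 0)
        = ∑ m : Fin N, a k * a k * b m * b m :=
      fun k => (Finset.sum_ite_eq univ k _).trans (by simp)
    simp only [h3]
    rw [Finset.sum_mul]
    refine Finset.sum_congr rfl fun k _ => ?_
    rw [Finset.mul_sum]
    refine Finset.sum_congr rfl fun m _ => ?_
    ring
  have t2 : ∑ k, ∑ l, ∑ m, ∑ n : Fin N,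
      (if l = n then (if k = m then a k * a l * b m * b n else 0) else 0)
      = (∑ k, a k * b k) ^ 2 := by
    have h1 : ∀ k l m : Fin N, ∑ n : Fin N,
        (if l = n then (if k = m then a k * a l * b m * b n else 0) else 0)
        = if k = m then a k * a l * b m * b l else 0 :=
      fun k l m => (Finset.sum_ite_eq univ l _).trans (by simp)
    simp only [h1]
    have h2 : ∀ k l : Fin N, ∑ m : Fin N, (if k = m then a k * a l * b m * b l else 0)
        = a k * a l * b k * b l :=
      fun k l => (Finset.sum_ite_eq univ k _).trans (by simp)
    simp only [h2]
    rw [sq, Finset.sum_mul]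
    refine Finset.sum_congr rfl fun k _ => ?_
    rw [Finset.mul_sum]
    refine Finset.sum_congr rfl fun l _ => ?_
    ring
  have t3 : ∑ k, ∑ l, ∑ m, ∑ n : Fin N,
      (if k = n then (if l = m then a k * a l * b m * b n else 0) else 0)
      = (∑ k, a k * b k) ^ 2 := by
    have h1 : ∀ k l m : Fin N, ∑ n : Fin N,
        (if k = n then (if l = m then a k * a l * b m * b n else 0) else 0)
        = if l = m then a k * a l * b m * b k else 0 :=
      fun k l m => (Finset.sum_ite_eq univ k _).trans (by simp)
    simp only [h1]
    have h2 : ∀ k l : Fin N, ∑ m : Fin N, (if l = m then a k * a l * b m * b k else 0)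
        = a k * a l * b l * b k :=
      fun k l => (Finset.sum_ite_eq univ l _).trans (by simp)
    simp only [h2]
    rw [sq, Finset.sum_mul]
    refine Finset.sum_congr rfl fun k _ => ?_
    rw [Finset.mul_sum]
    refine Finset.sum_congr rfl fun l _ => ?_
    ring
  rw [t1, t2, t3]
  ring

lemma expand4 {N : ℕ} (f g h e : Fin N → ℝ) :
    (∑ k, f k) * (∑ l, g l) * ((∑ m, h m) * (∑ n, e n)) =
      ∑ k, ∑ l, ∑ m, ∑ n, f k * g l * (h m * e n) := by
  rw [Finset.sum_mul_sum, Finset.sum_mul_sum, Finset.sum_mul_sum]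
  refine Finset.sum_congr rfl fun k _ => ?_
  rw [Finset.sum_comm]
  refine Finset.sum_congr rfl fun l _ => ?_
  rw [Finset.sum_mul_sum]

lemma sq_sum_split {N : ℕ} (s : Finset (Fin N)) (f : Fin N → ℝ) :
    (∑ k ∈ s, f k) ^ 2 = ∑ k ∈ s, f k ^ 2 +
      2 * ∑ l ∈ s, ∑ k ∈ s.filter (fun k => l < k), f l * f k := by
  classical
  induction s using Finset.induction with
  | empty => simp
  | @insert a s ha ih =>
    rw [Finset.sum_insert ha, Finset.sum_insert ha, add_sq, ih, Finset.sum_insert ha]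
    have hfilter : ∀ l, (insert a s).filter (fun k => l < k)
        = if l < a then insert a (s.filter (fun k => l < k)) else s.filter (fun k => l < k) := by
      intro l
      by_cases h : l < a
      · rw [if_pos h, Finset.filter_insert, if_pos h]
      · rw [if_neg h, Finset.filter_insert, if_neg h]
    simp only [hfilter]
    have haa : ¬ a < a := lt_irrefl a
    rw [if_neg haa]
    have hsum : ∑ l ∈ s, ∑ k ∈ (if l < a then insert a (s.filter (fun k => l < k))
          else s.filter (fun k => l < k)), f l * f k
        = ∑ l ∈ s, ((if l < a then f l * f a else 0) + ∑ k ∈ s.filter (fun k => l < k), f l * f k) := by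
      refine Finset.sum_congr rfl fun l hl => ?_
      by_cases h : l < a
      · rw [if_pos h, if_pos h, Finset.sum_insert (by simp [ha])]
      · rw [if_neg h, if_neg h, zero_add]
    rw [hsum, Finset.sum_add_distrib]
    have hsplit : ∑ k ∈ s.filter (fun k => a < k), f a * f k
        + ∑ l ∈ s, (if l < a then f l * f a else 0) = f a * ∑ k ∈ s, f k := by
      rw [Finset.mul_sum]
      rw [← Finset.sum_filter]
      have : ∑ l ∈ s.filter (fun l => l < a), f l * f a
          = ∑ l ∈ s.filter (fun l => l < a), f a * f l := by
        refine Finset.sum_congr rfl fun l _ => mul_comm _ _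
      rw [this]
      rw [← Finset.sum_union]
      · refine (Finset.sum_congr ?_ fun x _ => rfl)
        rw [← Finset.filter_or]
        rw [Finset.filter_true_of_mem]
        intro x hx
        rcases lt_or_gt_of_ne (fun h : x = a => ha (h ▸ hx)) with h | h
        · right; exact h
        · left; exact h
      · rw [Finset.disjoint_filter]
        intro x _ h1 h2
        exact absurd h1 (asymm h2)
    ring_nf
    ring_nf at hsplit
    linarith [hsplit]




section Aux
variable {Ω : Type*} [MeasurableSpace Ω] {P : Measure Ω} [IsProbabilityMeasure P] {I : ℕ}
  {ε : Fin I → Ω → ℝ}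

lemma eps_pow_integrable (hmeas : ∀ i, Measurable (ε i))
    (hgauss : ∀ i, Measure.map (ε i) P = gaussianReal 0 1) (p : Fin I) (n : ℕ) :
    Integrable (fun ω => ε p ω ^ n) P := by
  have h := gmom_pow_integrable n
  rw [← hgauss p] at h
  rw [integrable_map_measure (continuous_pow n).measurable.aestronglyMeasurable
    (hmeas p).aemeasurable] at h
  exact h

lemma eps_pow_integral (hmeas : ∀ i, Measurable (ε i))
    (hgauss : ∀ i, Measure.map (ε i) P = gaussianReal 0 1) (p : Fin I) (n : ℕ) :
    ∫ ω, ε p ω ^ n ∂P = gmom n := by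
  rw [gmom, ← hgauss p, integral_map (hmeas p).aemeasurable
    (continuous_pow n).measurable.aestronglyMeasurable]

lemma prod_pow_key (hmeas : ∀ i, Measurable (ε i))
    (hindep : iIndepFun ε P)
    (hgauss : ∀ i, Measure.map (ε i) P = gaussianReal 0 1) (c : Fin I → ℕ) :
    ∀ s : Finset (Fin I), Integrable (fun ω => ∏ p ∈ s, ε p ω ^ c p) P ∧
      ∫ ω, ∏ p ∈ s, ε p ω ^ c p ∂P = ∏ p ∈ s, gmom (c p) := by
  classical
  have hgmeas : ∀ p, Measurable (fun ω => ε p ω ^ c p) :=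
    fun p => (hmeas p).pow_const (c p)
  have hgind : iIndepFun (fun p ω => ε p ω ^ c p) P := by
    have := hindep.comp (fun p (x : ℝ) => x ^ c p) (fun p => (continuous_pow (c p)).measurable)
    exact this
  intro s
  induction s using Finset.induction with
  | empty => simp
  | @insert a s ha ih =>
    have hD : IndepFun (∏ p ∈ s, (fun ω => ε p ω ^ c p)) (fun ω => ε a ω ^ c a) P :=
      iIndepFun.indepFun_finset_prod_of_notMem hgind hgmeas ha
    have hprodeq : (∏ p ∈ s, (fun ω => ε p ω ^ c p)) = fun ω => ∏ p ∈ s, ε p ω ^ c p := by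
      funext ω; exact Finset.prod_apply ω s _
    rw [hprodeq] at hD
    constructor
    · have hint := hD.symm.integrable_mul (eps_pow_integrable hmeas hgauss a (c a)) ih.1
      have : (fun ω => ∏ p ∈ insert a s, ε p ω ^ c p)
          = (fun ω => ε a ω ^ c a * ∏ p ∈ s, ε p ω ^ c p) := by
        funext ω; exact Finset.prod_insert ha
      rw [this]
      exact hint
    · have : (fun ω => ∏ p ∈ insert a s, ε p ω ^ c p)
          = (fun ω => ε a ω ^ c a) * (fun ω => ∏ p ∈ s, ε p ω ^ c p) := by
        funext ω; exact Finset.prod_insert ha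
      rw [show (∫ ω, ∏ p ∈ insert a s, ε p ω ^ c p ∂P)
          = ∫ ω, ((fun ω => ε a ω ^ c a) * (fun ω => ∏ p ∈ s, ε p ω ^ c p)) ω ∂P from by
        rw [← this]]
      rw [hD.symm.integral_mul_eq_mul_integral (hgmeas a).aestronglyMeasurable
        (Finset.measurable_prod s (fun p _ => hgmeas p)).aestronglyMeasurable]
      rw [Finset.prod_insert ha, ih.2, eps_pow_integral hmeas hgauss a (c a)]

end Aux


set_option maxHeartbeats 1000000 in
theorem covariance_of_squared_residuals {Ω : Type*} [MeasurableSpace Ω] (P : Measure Ω)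
    [IsProbabilityMeasure P] (I : ℕ) (hI : 3 ≤ I) (α : ℝ) (σ : Fin I → ℝ)
    (hσ : ∀ i, 0 < σ i) (ε : Fin I → Ω → ℝ) (hmeas : ∀ i, Measurable (ε i))
    (hindep : iIndepFun ε P)
    (hgauss : ∀ i, Measure.map (ε i) P = gaussianReal 0 1)
    (Y : Fin I → Ω → ℝ) (hY : ∀ i ω, Y i ω = α + σ i * ε i ω)
    (r : Fin I → Ω → ℝ) (hr : ∀ j ω, r j ω = (Y j ω - (∑ k, Y k ω) / I) ^ 2)
    (i j : Fin I) (hij : i ≠ j) :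
    ∫ ω, r i ω * r j ω ∂P - (∫ ω, r i ω ∂P) * (∫ ω, r j ω ∂P) =
      2 * ((I : ℝ) - 1) ^ 2 * ((σ i) ^ 4 + (σ j) ^ 4) / (I : ℝ) ^ 4 +
        4 * ((I : ℝ) - 1) ^ 2 * (σ i) ^ 2 * (σ j) ^ 2 / (I : ℝ) ^ 4 -
        4 * ((I : ℝ) - 1) *
          (∑ k ∈ (univ.erase i).erase j, (σ k) ^ 2 * ((σ i) ^ 2 + (σ j) ^ 2)) / (I : ℝ) ^ 4 +
        4 * (∑ l ∈ (univ.erase i).erase j,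
              ∑ k ∈ ((univ.erase i).erase j).filter (fun k => l < k),
                (σ l) ^ 2 * (σ k) ^ 2) / (I : ℝ) ^ 4 +
        2 * (∑ k ∈ (univ.erase i).erase j, (σ k) ^ 4) / (I : ℝ) ^ 4 := by
  classical
  have hI0 : (I : ℝ) ≠ 0 := by
    have : (0:ℝ) < I := by exact_mod_cast Nat.lt_of_lt_of_le (by norm_num) hI
    exact ne_of_gt this
  set a : Fin I → ℝ := fun k => (if k = i then σ i else 0) - σ k / I with ha
  set b : Fin I → ℝ := fun k => (if k = j then σ j else 0) - σ k / I with hb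
  -- pointwise residual forms
  have hsumY : ∀ ω, ∑ k, Y k ω = I * α + ∑ k, σ k * ε k ω := by
    intro ω
    simp only [hY]
    rw [Finset.sum_add_distrib, Finset.sum_const, Finset.card_univ, Fintype.card_fin,
      nsmul_eq_mul]
  have hUi : ∀ ω, Y i ω - (∑ k, Y k ω) / I = ∑ k, a k * ε k ω := by
    intro ω
    have hRHS : ∑ k, a k * ε k ω = σ i * ε i ω - (∑ k, σ k * ε k ω) / I := by
      simp only [ha, sub_mul, ite_mul, zero_mul, Finset.sum_sub_distrib,
        Finset.sum_ite_eq', Finset.mem_univ, if_pos, if_true]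
      rw [Finset.sum_div]
      congr 1
      exact Finset.sum_congr rfl fun k _ => by ring
    rw [hRHS, hsumY, hY]
    field_simp
    ring
  have hVj : ∀ ω, Y j ω - (∑ k, Y k ω) / I = ∑ k, b k * ε k ω := by
    intro ω
    have hRHS : ∑ k, b k * ε k ω = σ j * ε j ω - (∑ k, σ k * ε k ω) / I := by
      simp only [hb, sub_mul, ite_mul, zero_mul, Finset.sum_sub_distrib,
        Finset.sum_ite_eq', Finset.mem_univ, if_pos, if_true]
      rw [Finset.sum_div]
      congr 1
      exact Finset.sum_congr rfl fun k _ => by ring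
    rw [hRHS, hsumY, hY]
    field_simp
    ring
  have hri : ∀ ω, r i ω = (∑ k, a k * ε k ω) ^ 2 := fun ω => by rw [hr, hUi]
  have hrj : ∀ ω, r j ω = (∑ k, b k * ε k ω) ^ 2 := fun ω => by rw [hr, hVj]
  -- moment machinery
  have hfac : ∀ (k : Fin I) (ω : Ω), (∏ p, ε p ω ^ (if p = k then 1 else 0)) = ε k ω := by
    intro k ω
    have hp : ∀ p : Fin I, ε p ω ^ (if p = k then 1 else 0) = if p = k then ε p ω else 1 :=
      fun p => by split_ifs <;> simp
    rw [Finset.prod_congr rfl fun p _ => hp p, Finset.prod_ite_eq' univ k fun p => ε p ω]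
    simp
  have hmono2 : ∀ (k l : Fin I) (ω : Ω), ε k ω * ε l ω
      = ∏ p, ε p ω ^ ((if p = k then 1 else 0) + (if p = l then 1 else 0)) := by
    intro k l ω
    simp only [pow_add, Finset.prod_mul_distrib, hfac]
  have hmono4 : ∀ (k l m n : Fin I) (ω : Ω), ε k ω * ε l ω * ε m ω * ε n ω
      = ∏ p, ε p ω ^ ((if p = k then 1 else 0) + (if p = l then 1 else 0) +
          (if p = m then 1 else 0) + (if p = n then 1 else 0)) := by
    intro k l m n ω
    simp only [pow_add, Finset.prod_mul_distrib, hfac]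
  have hM2 : ∀ k l, ∫ ω, ε k ω * ε l ω ∂P = (if k = l then (1:ℝ) else 0) := by
    intro k l
    have h := (prod_pow_key hmeas hindep hgauss
      (fun p => (if p = k then 1 else 0) + (if p = l then 1 else 0)) univ).2
    simp only [hmono2 k l]
    rw [h]
    exact isserlis2 gmom gmom_zero gmom_one gmom_two k l
  have hInt2 : ∀ k l, Integrable (fun ω => ε k ω * ε l ω) P := by
    intro k l
    have h := (prod_pow_key hmeas hindep hgauss
      (fun p => (if p = k then 1 else 0) + (if p = l then 1 else 0)) univ).1
    rw [show (fun ω => ε k ω * ε l ω) = fun ω =>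
      ∏ p, ε p ω ^ ((if p = k then 1 else 0) + (if p = l then 1 else 0)) from
      funext (hmono2 k l)]
    exact h
  have hM4 : ∀ k l m n, ∫ ω, ε k ω * ε l ω * ε m ω * ε n ω ∂P =
      (if k = l then (1:ℝ) else 0) * (if m = n then (1:ℝ) else 0) +
      (if k = m then (1:ℝ) else 0) * (if l = n then (1:ℝ) else 0) +
      (if k = n then (1:ℝ) else 0) * (if l = m then (1:ℝ) else 0) := by
    intro k l m n
    have h := (prod_pow_key hmeas hindep hgauss
      (fun p => (if p = k then 1 else 0) + (if p = l then 1 else 0) +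
        (if p = m then 1 else 0) + (if p = n then 1 else 0)) univ).2
    simp only [hmono4 k l m n]
    rw [h]
    exact isserlis gmom gmom_zero gmom_one gmom_two gmom_three gmom_four k l m n
  have hInt4 : ∀ k l m n, Integrable (fun ω => ε k ω * ε l ω * ε m ω * ε n ω) P := by
    intro k l m n
    have h := (prod_pow_key hmeas hindep hgauss
      (fun p => (if p = k then 1 else 0) + (if p = l then 1 else 0) +
        (if p = m then 1 else 0) + (if p = n then 1 else 0)) univ).1
    rw [show (fun ω => ε k ω * ε l ω * ε m ω * ε n ω) = fun ω =>
      ∏ p, ε p ω ^ ((if p = k then 1 else 0) + (if p = l then 1 else 0) +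
        (if p = m then 1 else 0) + (if p = n then 1 else 0)) from funext (hmono4 k l m n)]
    exact h
  -- second moments of residuals
  have hsq : ∀ (c : Fin I → ℝ), ∫ ω, (∑ k, c k * ε k ω) ^ 2 ∂P = ∑ k, c k ^ 2 := by
    intro c
    have hpt : ∀ ω, (∑ k, c k * ε k ω) ^ 2
        = ∑ k, ∑ l, (c k * c l) * (ε k ω * ε l ω) := by
      intro ω
      rw [sq, Finset.sum_mul_sum]
      exact Finset.sum_congr rfl fun k _ => Finset.sum_congr rfl fun l _ => by ring
    simp only [hpt]
    rw [integral_finset_sum univ (fun k _ =>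
      integrable_finset_sum univ (fun l _ => (hInt2 k l).const_mul _))]
    have hk : ∀ k : Fin I, ∫ ω, ∑ l, (c k * c l) * (ε k ω * ε l ω) ∂P = c k ^ 2 := by
      intro k
      rw [integral_finset_sum univ (fun l _ => (hInt2 k l).const_mul _)]
      have hl : ∀ l : Fin I, ∫ ω, (c k * c l) * (ε k ω * ε l ω) ∂P
          = (c k * c l) * (if k = l then (1:ℝ) else 0) := by
        intro l
        rw [integral_const_mul, hM2]
      simp only [hl, mul_ite, mul_one, mul_zero]
      rw [Finset.sum_ite_eq univ k (fun l => c k * c l)]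
      simp [sq]
    simp only [hk]
  have hri_int : ∫ ω, r i ω ∂P = ∑ k, a k ^ 2 := by
    simp only [hri]; exact hsq a
  have hrj_int : ∫ ω, r j ω ∂P = ∑ k, b k ^ 2 := by
    simp only [hrj]; exact hsq b
  -- fourth moment of residual product
  have hrirj_int : ∫ ω, r i ω * r j ω ∂P
      = (∑ k, a k ^ 2) * (∑ k, b k ^ 2) + 2 * (∑ k, a k * b k) ^ 2 := by
    have hpt : ∀ ω, r i ω * r j ω = ∑ k, ∑ l, ∑ m, ∑ n,
        (a k * a l * b m * b n) * (ε k ω * ε l ω * ε m ω * ε n ω) := by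
      intro ω
      rw [hri, hrj]
      have h1 : (∑ k, a k * ε k ω) ^ 2 * (∑ k, b k * ε k ω) ^ 2
          = (∑ k, a k * ε k ω) * (∑ l, a l * ε l ω) *
            ((∑ m, b m * ε m ω) * (∑ n, b n * ε n ω)) := by ring
      rw [h1, expand4]
      exact Finset.sum_congr rfl fun k _ => Finset.sum_congr rfl fun l _ =>
        Finset.sum_congr rfl fun m _ => Finset.sum_congr rfl fun n _ => by ring
    simp only [hpt]
    rw [integral_finset_sum univ (fun k _ => integrable_finset_sum univ (fun l _ =>
      integrable_finset_sum univ (fun m _ => integrable_finset_sum univ (fun n _ =>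
        (hInt4 k l m n).const_mul _))))]
    have hstep : ∀ k : Fin I, ∫ ω, ∑ l, ∑ m, ∑ n,
        (a k * a l * b m * b n) * (ε k ω * ε l ω * ε m ω * ε n ω) ∂P
        = ∑ l, ∑ m, ∑ n, (a k * a l * b m * b n) *
          ((if k = l then (1:ℝ) else 0) * (if m = n then (1:ℝ) else 0) +
           (if k = m then (1:ℝ) else 0) * (if l = n then (1:ℝ) else 0) +
           (if k = n then (1:ℝ) else 0) * (if l = m then (1:ℝ) else 0)) := by
      intro k
      rw [integral_finset_sum univ (fun l _ => integrable_finset_sum univ (fun m _ =>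
        integrable_finset_sum univ (fun n _ => (hInt4 k l m n).const_mul _)))]
      refine Finset.sum_congr rfl fun l _ => ?_
      rw [integral_finset_sum univ (fun m _ =>
        integrable_finset_sum univ (fun n _ => (hInt4 k l m n).const_mul _))]
      refine Finset.sum_congr rfl fun m _ => ?_
      rw [integral_finset_sum univ (fun n _ => (hInt4 k l m n).const_mul _)]
      refine Finset.sum_congr rfl fun n _ => ?_
      rw [integral_const_mul, hM4]
    simp only [hstep]
    exact quad_sum a b
  -- the covariance so far
  have hcov : ∫ ω, r i ω * r j ω ∂P - (∫ ω, r i ω ∂P) * (∫ ω, r j ω ∂P)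
      = 2 * (∑ k, a k * b k) ^ 2 := by
    rw [hrirj_int, hri_int, hrj_int]; ring
  rw [hcov]
  -- compute ∑ a k * b k
  have hab : ∀ k, a k * b k = σ k ^ 2 / (I:ℝ) ^ 2 -
      ((if k = i then σ i ^ 2 / I else 0) + (if k = j then σ j ^ 2 / I else 0)) := by
    intro k
    by_cases h1 : k = i <;> by_cases h2 : k = j
    · exact absurd (h1.symm.trans h2) hij
    · simp only [ha, hb, h1, if_pos rfl, if_neg hij, if_true]
      field_simp
      ring
    · simp only [ha, hb, h2, if_pos rfl, if_neg (show j ≠ i from fun h => hij h.symm), if_true]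
      field_simp
      ring
    · simp only [ha, hb, if_neg h1, if_neg h2]
      field_simp
      ring
  have hsplit : ∑ k, σ k ^ 2 = σ i ^ 2 + (σ j ^ 2 + ∑ k ∈ (univ.erase i).erase j, σ k ^ 2) := by
    rw [← Finset.add_sum_erase _ _ (Finset.mem_univ i)]
    congr 1
    rw [← Finset.add_sum_erase _ _ (Finset.mem_erase.mpr
      ⟨fun h => hij h.symm, Finset.mem_univ j⟩)]
  have hS : ∑ k, a k * b k
      = ((∑ k ∈ (univ.erase i).erase j, σ k ^ 2) - ((I:ℝ) - 1) * (σ i ^ 2 + σ j ^ 2))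
        / (I:ℝ) ^ 2 := by
    simp only [hab]
    rw [Finset.sum_sub_distrib, Finset.sum_add_distrib,
      Finset.sum_ite_eq' univ i (fun k => σ i ^ 2 / (I:ℝ)),
      Finset.sum_ite_eq' univ j (fun k => σ j ^ 2 / (I:ℝ))]
    simp only [Finset.mem_univ, if_true]
    rw [← Finset.sum_div, hsplit]
    field_simp
    ring
  rw [hS]
  -- final algebra
  have hQ : ∑ l ∈ (univ.erase i).erase j,
      ∑ k ∈ ((univ.erase i).erase j).filter (fun k => l < k), (σ l) ^ 2 * (σ k) ^ 2
      = ((∑ k ∈ (univ.erase i).erase j, σ k ^ 2) ^ 2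
          - ∑ k ∈ (univ.erase i).erase j, σ k ^ 4) / 2 := by
    have h := sq_sum_split ((univ.erase i).erase j) (fun k => σ k ^ 2)
    have h4 : ∑ k ∈ (univ.erase i).erase j, ((σ k ^ 2) ^ 2)
        = ∑ k ∈ (univ.erase i).erase j, σ k ^ 4 :=
      Finset.sum_congr rfl fun k _ => by ring
    rw [h4] at h
    linarith
  have hT : ∑ k ∈ (univ.erase i).erase j, (σ k) ^ 2 * ((σ i) ^ 2 + (σ j) ^ 2)
      = (∑ k ∈ (univ.erase i).erase j, σ k ^ 2) * ((σ i) ^ 2 + (σ j) ^ 2) :=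
    (Finset.sum_mul _ _ _).symm
  rw [hQ, hT]
  field_simp
  ring
end
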